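/- Fix η with 0 < η < 1, η̄ = 1 − η, and weights w1, w2 with 0 < w1 < w2 and w1 + w2 = 1. Then: (i) for every r ≥ 0 one has w2·(η̄ + η·2^{−2r})² − w1·η·2^{−4r} > 0, so that g(r) = −(1/2)·log2( w1·η̄·2^{−2r} / ( w2·(η̄ + η·2^{−2r})² − w1·η·2^{−4r} ) ) is well defined; and (ii) for all r1, r2 ≥ 0, the inequality r2 ≤ g(r1) holds if and only if w2·(d2min(r1,r2))² ≥ w1·d12min(r1,r2). -/

import Mathlib

/-- `d1min(r1,r2) = (η̄ + η·2^{−2r2})·2^{−2r1}`. -/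
noncomputable def d1min (η r1 r2 : ℝ) : ℝ :=
  ((1 - η) + η * (2 : ℝ) ^ (-2 * r2)) * (2 : ℝ) ^ (-2 * r1)

/-- `d2min(r1,r2) = (η̄ + η·2^{−2r1})·2^{−2r2}`. -/
noncomputable def d2min (η r1 r2 : ℝ) : ℝ :=
  ((1 - η) + η * (2 : ℝ) ^ (-2 * r1)) * (2 : ℝ) ^ (-2 * r2)

/-- `d12min(r1,r2) = (η̄ + η·2^{−2(r1+r2)})·2^{−2(r1+r2)}`. -/
noncomputable def d12min (η r1 r2 : ℝ) : ℝ :=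
  ((1 - η) + η * (2 : ℝ) ^ (-2 * (r1 + r2))) * (2 : ℝ) ^ (-2 * (r1 + r2))

/-- The feasible distortion set `S(r1,r2)`. -/
noncomputable def distSet (η r1 r2 : ℝ) : Set (ℝ × ℝ) :=
  {D | d1min η r1 r2 ≤ D.1 ∧ d2min η r1 r2 ≤ D.2 ∧ d12min η r1 r2 ≤ D.1 * D.2}


/-- The threshold function `g` of Propositions 1 and 3 of the paper. -/
noncomputable def gThresh (η w1 w2 r : ℝ) : ℝ :=
  -(1 / 2) * Real.logb 2
    (w1 * (1 - η) * (2 : ℝ) ^ (-2 * r) /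
      (w2 * ((1 - η) + η * (2 : ℝ) ^ (-2 * r)) ^ 2 - w1 * η * (2 : ℝ) ^ (-4 * r)))

/-- The analytic content of the threshold function `g`:
(i) its denominator is strictly positive for every `r ≥ 0`, so `g` is well
defined, and (ii) for `r1, r2 ≥ 0`, `r2 ≤ g(r1)` iff
`w2·(d2min(r1,r2))² ≥ w1·d12min(r1,r2)`. -/
theorem gThresh_well_defined_and_characterizes (η w1 w2 : ℝ)
    (hη0 : 0 < η) (hη1 : η < 1)
    (hw0 : 0 < w1) (hw12 : w1 < w2) (hwsum : w1 + w2 = 1) :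
    (∀ r : ℝ, 0 ≤ r →
      0 < w2 * ((1 - η) + η * (2 : ℝ) ^ (-2 * r)) ^ 2 - w1 * η * (2 : ℝ) ^ (-4 * r)) ∧
    (∀ r1 r2 : ℝ, 0 ≤ r1 → 0 ≤ r2 →
      (r2 ≤ gThresh η w1 w2 r1 ↔
        w1 * d12min η r1 r2 ≤ w2 * (d2min η r1 r2) ^ 2)) := by
  have hw2 : 0 < w2 := lt_trans hw0 hw12
  have h4eq : ∀ r : ℝ, (2 : ℝ) ^ (-4 * r) = ((2 : ℝ) ^ (-2 * r)) ^ 2 := by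
    intro r
    rw [← Real.rpow_natCast ((2 : ℝ) ^ (-2 * r)) 2, ← Real.rpow_mul (by norm_num)]
    congr 1; ring
  have key : ∀ r : ℝ, 0 ≤ r →
      0 < w2 * ((1 - η) + η * (2 : ℝ) ^ (-2 * r)) ^ 2 - w1 * η * (2 : ℝ) ^ (-4 * r) := by
    intro r hr
    have ht : (0 : ℝ) < (2 : ℝ) ^ (-2 * r) := Real.rpow_pos_of_pos two_pos _
    have ht1 : (2 : ℝ) ^ (-2 * r) ≤ 1 :=
      Real.rpow_le_one_of_one_le_of_nonpos one_le_two (by linarith)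
    rw [h4eq r]
    set t := (2 : ℝ) ^ (-2 * r)
    nlinarith [mul_nonneg (sub_pos.mpr hw12).le (sq_nonneg ((1 - η) + η * t)),
      mul_pos hw0 (show (0:ℝ) < (1 - η) ^ 2 + (1 - η) * η * t * (2 - t) by
        nlinarith [mul_pos (mul_pos (mul_pos (sub_pos.mpr hη1) hη0) ht)
          (show (0:ℝ) < 2 - t by linarith),
          mul_pos (sub_pos.mpr hη1) (sub_pos.mpr hη1)])]
  refine ⟨key, fun r1 r2 hr1 hr2 => ?_⟩
  have hD := key r1 hr1
  have ht : (0 : ℝ) < (2 : ℝ) ^ (-2 * r1) := Real.rpow_pos_of_pos two_pos _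
  have hs : (0 : ℝ) < (2 : ℝ) ^ (-2 * r2) := Real.rpow_pos_of_pos two_pos _
  have hnum : (0 : ℝ) < w1 * (1 - η) * (2 : ℝ) ^ (-2 * r1) :=
    mul_pos (mul_pos hw0 (sub_pos.mpr hη1)) ht
  have hX : (0 : ℝ) < w1 * (1 - η) * (2 : ℝ) ^ (-2 * r1) /
      (w2 * ((1 - η) + η * (2 : ℝ) ^ (-2 * r1)) ^ 2 - w1 * η * (2 : ℝ) ^ (-4 * r1)) :=
    div_pos hnum hD
  have hts : (2 : ℝ) ^ (-2 * (r1 + r2)) = (2 : ℝ) ^ (-2 * r1) * (2 : ℝ) ^ (-2 * r2) := by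
    rw [← Real.rpow_add two_pos]; ring_nf
  have step1 : r2 ≤ gThresh η w1 w2 r1 ↔
      w1 * (1 - η) * (2 : ℝ) ^ (-2 * r1) /
        (w2 * ((1 - η) + η * (2 : ℝ) ^ (-2 * r1)) ^ 2 - w1 * η * (2 : ℝ) ^ (-4 * r1)) ≤
      (2 : ℝ) ^ (-2 * r2) := by
    rw [gThresh, ← Real.logb_le_iff_le_rpow one_lt_two hX]
    constructor <;> intro h <;> nlinarith
  rw [step1, div_le_iff₀ hD, d12min, d2min, hts, h4eq r1]
  set t := (2 : ℝ) ^ (-2 * r1)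
  set s := (2 : ℝ) ^ (-2 * r2)
  constructor
  · intro h
    nlinarith [mul_le_mul_of_nonneg_left h hs.le]
  · intro h
    have h2 : s * (w1 * (1 - η) * t) ≤ s * ((w2 * ((1 - η) + t * η) ^ 2 - w1 * η * t ^ 2) * s) := by
      nlinarith
    have := (mul_le_mul_iff_of_pos_left hs).mp h2
    linarith
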